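/- Let A be a quantifier-free symbolic heap and let B = ∃z⃗. Q with Q quantifier-free, where no variable of z⃗ occurs on the right-hand side of any points-to formula in Q. Then the biabduction problem (A, B) has a solution (quantifier-free X, Y with A*X satisfiable and A*X ⊨ B*Y) if and only if the biabduction problem (A, Q) has a solution. -/

import Mathlib

/-! ## Array separation logic (ASL): syntax and stack-heap semantics -/

/-- Terms of array separation logic: variables (named by naturals), constants,
addition, and multiplication by a constant. -/
inductive Trm : Type where
  | var : ℕ → Trm
  | const : ℕ → Trm
  | add : Trm → Trm → Trm
  | smul : ℕ → Trm → Trm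

/-- A stack maps variables to naturals. -/
abbrev Stack := ℕ → ℕ

/-- Evaluation of terms under a stack. -/
def Trm.eval (s : Stack) : Trm → ℕ
  | .var x => s x
  | .const n => n
  | .add t u => t.eval s + u.eval s
  | .smul n t => n * t.eval s

/-- Variables occurring in a term. -/
def Trm.vars : Trm → Set ℕ
  | .var x => {x}
  | .const _ => ∅
  | .add t u => t.vars ∪ u.vars
  | .smul _ t => t.vars

/-- Pure formulas: conjunctions of atomic arithmetic constraints. -/
inductive PureF : Type where
  | tru : PureF
  | eq : Trm → Trm → PureF
  | ne : Trm → Trm → PureF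
  | le : Trm → Trm → PureF
  | lt : Trm → Trm → PureF
  | and : PureF → PureF → PureF

/-- Satisfaction of pure formulas (depends only on the stack). -/
def PureF.sat (s : Stack) : PureF → Prop
  | .tru => True
  | .eq t u => t.eval s = u.eval s
  | .ne t u => t.eval s ≠ u.eval s
  | .le t u => t.eval s ≤ u.eval s
  | .lt t u => t.eval s < u.eval s
  | .and p q => p.sat s ∧ q.sat s

def PureF.vars : PureF → Set ℕ
  | .tru => ∅
  | .eq t u => t.vars ∪ u.vars
  | .ne t u => t.vars ∪ u.vars
  | .le t u => t.vars ∪ u.vars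
  | .lt t u => t.vars ∪ u.vars
  | .and p q => p.vars ∪ q.vars

/-- The (top-level) terms occurring in a pure formula. -/
def PureF.trms : PureF → List Trm
  | .tru => []
  | .eq t u => [t, u]
  | .ne t u => [t, u]
  | .le t u => [t, u]
  | .lt t u => [t, u]
  | .and p q => p.trms ++ q.trms

/-- The conjuncts of a pure formula. -/
def PureF.conjuncts : PureF → List PureF
  | .and p q => p.conjuncts ++ q.conjuncts
  | p => [p]

/-- Finite conjunction. -/
def bigAnd : List PureF → PureF
  | [] => .tru
  | p :: ps => .and p (bigAnd ps)

/-- Spatial formulas: `emp`, points-to, arrays, and separating conjunction. -/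
inductive Spatial : Type where
  | emp : Spatial
  | pto : Trm → Trm → Spatial
  | arr : Trm → Trm → Spatial
  | star : Spatial → Spatial → Spatial

/-- Heaps: finite partial functions from ℕ (locations) to ℕ (values). -/
abbrev Heap := Finmap (fun _ : ℕ => ℕ)

/-- Satisfaction of spatial formulas. -/
def Spatial.sat (s : Stack) : Spatial → Heap → Prop
  | .emp, h => h = ∅
  | .pto t u, h =>
      h.keys = {Trm.eval s t} ∧ Finmap.lookup (Trm.eval s t) h = some (Trm.eval s u)
  | .arr t u, h =>
      Trm.eval s t ≤ Trm.eval s u ∧ h.keys = Finset.Icc (Trm.eval s t) (Trm.eval s u)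
  | .star F G, h =>
      ∃ h₁ h₂ : Heap, h₁.Disjoint h₂ ∧ h = h₁ ∪ h₂ ∧ F.sat s h₁ ∧ G.sat s h₂

def Spatial.vars : Spatial → Set ℕ
  | .emp => ∅
  | .pto t u => t.vars ∪ u.vars
  | .arr t u => t.vars ∪ u.vars
  | .star F G => F.vars ∪ G.vars

/-- The (top-level) terms occurring in a spatial formula. -/
def Spatial.trms : Spatial → List Trm
  | .emp => []
  | .pto t u => [t, u]
  | .arr t u => [t, u]
  | .star F G => F.trms ++ G.trms

/-- The points-to atoms of a spatial formula, as (address, value) pairs. -/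
def Spatial.ptos : Spatial → List (Trm × Trm)
  | .emp => []
  | .pto t u => [(t, u)]
  | .arr _ _ => []
  | .star F G => F.ptos ++ G.ptos

/-- The array atoms of a spatial formula, as endpoint pairs. -/
def Spatial.arrs : Spatial → List (Trm × Trm)
  | .emp => []
  | .pto _ _ => []
  | .arr t u => [(t, u)]
  | .star F G => F.arrs ++ G.arrs

/-- The arrays of the array abstraction `⟨A⟩`: each points-to `c ↦ d` is
replaced by the single-cell array `array(c,c)`. -/
def Spatial.absArrays : Spatial → List (Trm × Trm)
  | .emp => []
  | .pto t _ => [(t, t)]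
  | .arr t u => [(t, u)]
  | .star F G => F.absArrays ++ G.absArrays

/-- Finite separating conjunction. -/
def bigStar : List Spatial → Spatial
  | [] => .emp
  | F :: Fs => .star F (bigStar Fs)

/-- Quantifier-free symbolic heaps `Π : F`. -/
structure SymHeap : Type where
  pure : PureF
  spatial : Spatial

/-- Satisfaction of quantifier-free symbolic heaps. -/
def SymHeap.sat (s : Stack) (h : Heap) (A : SymHeap) : Prop :=
  A.pure.sat s ∧ A.spatial.sat s h

def SymHeap.vars (A : SymHeap) : Set ℕ := A.pure.vars ∪ A.spatial.vars

/-- All (top-level) terms occurring in a symbolic heap. -/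
def SymHeap.trms (A : SymHeap) : List Trm := A.pure.trms ++ A.spatial.trms

/-- Lifting `*` to symbolic heaps: conjoin pure parts, `*`-conjoin spatial parts. -/
def SymHeap.star (A X : SymHeap) : SymHeap :=
  ⟨.and A.pure X.pure, .star A.spatial X.spatial⟩

/-- Satisfiability of a symbolic heap. -/
def SymHeap.Satisfiable (A : SymHeap) : Prop := ∃ (s : Stack) (h : Heap), A.sat s h

/-- Semantic entailment between quantifier-free symbolic heaps. -/
def Entails (A B : SymHeap) : Prop := ∀ (s : Stack) (h : Heap), A.sat s h → B.sat s h

/-- Existentially quantified symbolic heaps `∃ z⃗. Π : F`. -/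
structure QSymHeap : Type where
  bound : List ℕ
  body : SymHeap

/-- Satisfaction of quantified symbolic heaps: some extension of the stack on the
bound variables satisfies the body. -/
def QSymHeap.sat (s : Stack) (h : Heap) (B : QSymHeap) : Prop :=
  ∃ s' : Stack, (∀ x : ℕ, x ∉ B.bound → s' x = s x) ∧ B.body.sat s' h

/-! ## The arithmetic encodings γ, β, φ, ψ₁, ψ₂, χ (interpreted over stacks) -/

/-- `s ⊨ γ(A)`: the Presburger satisfiability encoding of `A`, i.e. the pure part
of `A` together with well-definedness and pairwise disjointness of the arrays of
the array abstraction `⟨A⟩`. -/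
def gammaSat (A : SymHeap) (s : Stack) : Prop :=
  A.pure.sat s ∧
  (∀ p ∈ A.spatial.absArrays, Trm.eval s p.1 ≤ Trm.eval s p.2) ∧
  A.spatial.absArrays.Pairwise (fun p q =>
    Trm.eval s p.2 < Trm.eval s q.1 ∨ Trm.eval s q.2 < Trm.eval s p.1)

/-- `s ⊨ β(A,B)`. -/
def betaSat (A B : SymHeap) (s : Stack) : Prop :=
  gammaSat A s ∧ gammaSat B s ∧
  (∀ p ∈ B.spatial.ptos, ∀ q ∈ A.spatial.arrs,
      Trm.eval s p.1 < Trm.eval s q.1 ∨ Trm.eval s p.1 > Trm.eval s q.2) ∧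
  (∀ p ∈ A.spatial.ptos, ∀ q ∈ B.spatial.ptos,
      Trm.eval s p.1 ≠ Trm.eval s q.1 ∨ Trm.eval s p.2 = Trm.eval s q.2)

/-- The term set `Terms(A,B)`: all terms occurring in `A` and `B`, together with
the successor terms `b_i + 1`, `d_i + 1` (array right endpoints) and
`t_i + 1`, `v_i + 1` (points-to addresses). -/
def termSet (A B : SymHeap) : List Trm :=
  A.trms ++ B.trms ++
  (A.spatial.arrs.map fun p => Trm.add p.2 (Trm.const 1)) ++
  (B.spatial.arrs.map fun p => Trm.add p.2 (Trm.const 1)) ++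
  (A.spatial.ptos.map fun p => Trm.add p.1 (Trm.const 1)) ++
  (B.spatial.ptos.map fun p => Trm.add p.1 (Trm.const 1))

/-- A solution seed for the biabduction instance `(A,B)`. -/
def IsSolutionSeed (A B : SymHeap) (Δ : PureF) : Prop :=
  (∃ s : Stack, Δ.sat s) ∧
  (∀ s : Stack, Δ.sat s → betaSat A B s) ∧
  (∀ δ ∈ Δ.conjuncts, ∃ t ∈ termSet A B, ∃ u ∈ termSet A B,
      δ = PureF.lt t u ∨ δ = PureF.eq t u) ∧
  (∀ t ∈ termSet A B, ∀ u ∈ termSet A B, ∃ δ ∈ Δ.conjuncts,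
      δ = PureF.lt t u ∨ δ = PureF.lt u t ∨ δ = PureF.eq t u)

/-- The (quantifier-free) biabduction problem `(A,B)` has a solution. -/
def HasBiabductionSolution (A B : SymHeap) : Prop :=
  ∃ X Y : SymHeap, (A.star X).Satisfiable ∧ Entails (A.star X) (B.star Y)

/-- `s ⊨ φ(A,B)` (over the array abstractions of `A` and `B`). -/
def phiSat (A B : SymHeap) (s : Stack) : Prop :=
  ∃ x : ℕ,
    (∃ p ∈ A.spatial.absArrays, Trm.eval s p.1 ≤ x ∧ x ≤ Trm.eval s p.2) ∧
    ∀ q ∈ B.spatial.absArrays, x < Trm.eval s q.1 ∨ x > Trm.eval s q.2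

/-- `s ⊨ ψ₁(A,B)`: some points-to address of `B` is covered by an array of `A`. -/
def psi1Sat (A B : SymHeap) (s : Stack) : Prop :=
  ∃ p ∈ A.spatial.arrs, ∃ q ∈ B.spatial.ptos,
    Trm.eval s p.1 ≤ Trm.eval s q.1 ∧ Trm.eval s q.1 ≤ Trm.eval s p.2

/-- `s ⊨ ψ₂(A,B)`: some pointers of `A` and `B` share an address but disagree on
their contents. -/
def psi2Sat (A B : SymHeap) (s : Stack) : Prop :=
  ∃ p ∈ A.spatial.ptos, ∃ q ∈ B.spatial.ptos,
    Trm.eval s p.1 = Trm.eval s q.1 ∧ Trm.eval s p.2 ≠ Trm.eval s q.2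

/-- `s ⊨ χ(A, ∃z⃗.Q)`. -/
def chiSat (A : SymHeap) (zs : List ℕ) (Q : SymHeap) (s : Stack) : Prop :=
  gammaSat A s ∧
  ∀ s' : Stack, (∀ x : ℕ, x ∉ zs → s' x = s x) →
    (¬ gammaSat Q s' ∨ phiSat A Q s' ∨ phiSat Q A s' ∨
      psi1Sat A Q s' ∨ psi2Sat A Q s')


/-! ## Auxiliary machinery for the proof -/

section Aux

/-! ### Stack agreement lemmas -/

theorem eval_congr {s s' : Stack} : ∀ {t : Trm}, (∀ x ∈ t.vars, s x = s' x) →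
    t.eval s = t.eval s'
  | .var x, h => h x rfl
  | .const _, _ => rfl
  | .add t u, h => by
      simp only [Trm.eval]
      rw [eval_congr (t := t) fun x hx => h x (Set.mem_union_left _ hx),
        eval_congr (t := u) fun x hx => h x (Set.mem_union_right _ hx)]
  | .smul n t, h => by
      simp only [Trm.eval]
      rw [eval_congr (t := t) h]

theorem psat_congr {s s' : Stack} : ∀ {p : PureF}, (∀ x ∈ p.vars, s x = s' x) →
    (p.sat s ↔ p.sat s')
  | .tru, _ => Iff.rfl
  | .eq t u, h => by
      simp only [PureF.sat]
      rw [eval_congr (t := t) fun x hx => h x (Set.mem_union_left _ hx),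
        eval_congr (t := u) fun x hx => h x (Set.mem_union_right _ hx)]
  | .ne t u, h => by
      simp only [PureF.sat]
      rw [eval_congr (t := t) fun x hx => h x (Set.mem_union_left _ hx),
        eval_congr (t := u) fun x hx => h x (Set.mem_union_right _ hx)]
  | .le t u, h => by
      simp only [PureF.sat]
      rw [eval_congr (t := t) fun x hx => h x (Set.mem_union_left _ hx),
        eval_congr (t := u) fun x hx => h x (Set.mem_union_right _ hx)]
  | .lt t u, h => by
      simp only [PureF.sat]
      rw [eval_congr (t := t) fun x hx => h x (Set.mem_union_left _ hx),
        eval_congr (t := u) fun x hx => h x (Set.mem_union_right _ hx)]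
  | .and p q, h =>
      and_congr (psat_congr fun x hx => h x (Set.mem_union_left _ hx))
        (psat_congr fun x hx => h x (Set.mem_union_right _ hx))

theorem ssat_congr {s s' : Stack} : ∀ {F : Spatial} {h : Heap},
    (∀ x ∈ F.vars, s x = s' x) → (F.sat s h ↔ F.sat s' h)
  | .emp, _, _ => Iff.rfl
  | .pto t u, _, hv => by
      simp only [Spatial.sat]
      rw [eval_congr (t := t) fun x hx => hv x (Set.mem_union_left _ hx),
        eval_congr (t := u) fun x hx => hv x (Set.mem_union_right _ hx)]
  | .arr t u, _, hv => by
      simp only [Spatial.sat]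
      rw [eval_congr (t := t) fun x hx => hv x (Set.mem_union_left _ hx),
        eval_congr (t := u) fun x hx => hv x (Set.mem_union_right _ hx)]
  | .star F G, h, hv => by
      simp only [Spatial.sat]
      constructor <;> rintro ⟨h1, h2, hd, hu, hF, hG⟩
      · exact ⟨h1, h2, hd, hu,
          (ssat_congr fun x hx => hv x (Set.mem_union_left _ hx)).mp hF,
          (ssat_congr fun x hx => hv x (Set.mem_union_right _ hx)).mp hG⟩
      · exact ⟨h1, h2, hd, hu,
          (ssat_congr fun x hx => hv x (Set.mem_union_left _ hx)).mpr hF,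
          (ssat_congr fun x hx => hv x (Set.mem_union_right _ hx)).mpr hG⟩

/-! ### Syntactic variable lists -/

def trmVarList : Trm → List ℕ
  | .var x => [x]
  | .const _ => []
  | .add t u => trmVarList t ++ trmVarList u
  | .smul _ t => trmVarList t

theorem mem_trmVarList {x : ℕ} : ∀ {t : Trm}, x ∈ trmVarList t ↔ x ∈ t.vars
  | .var y => by simp [trmVarList, Trm.vars]
  | .const n => by simp [trmVarList, Trm.vars]
  | .add t u => by
      simp [trmVarList, Trm.vars, mem_trmVarList (t := t), mem_trmVarList (t := u)]
  | .smul n t => by simp [trmVarList, Trm.vars, mem_trmVarList (t := t)]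

def pureVarList : PureF → List ℕ
  | .tru => []
  | .eq t u => trmVarList t ++ trmVarList u
  | .ne t u => trmVarList t ++ trmVarList u
  | .le t u => trmVarList t ++ trmVarList u
  | .lt t u => trmVarList t ++ trmVarList u
  | .and p q => pureVarList p ++ pureVarList q

theorem mem_pureVarList {x : ℕ} : ∀ {p : PureF}, x ∈ pureVarList p ↔ x ∈ p.vars
  | .tru => by simp [pureVarList, PureF.vars]
  | .eq t u => by simp [pureVarList, PureF.vars, mem_trmVarList]
  | .ne t u => by simp [pureVarList, PureF.vars, mem_trmVarList]
  | .le t u => by simp [pureVarList, PureF.vars, mem_trmVarList]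
  | .lt t u => by simp [pureVarList, PureF.vars, mem_trmVarList]
  | .and p q => by
      simp [pureVarList, PureF.vars, mem_pureVarList (p := p), mem_pureVarList (p := q)]

def spatialVarList : Spatial → List ℕ
  | .emp => []
  | .pto t u => trmVarList t ++ trmVarList u
  | .arr t u => trmVarList t ++ trmVarList u
  | .star F G => spatialVarList F ++ spatialVarList G

theorem mem_spatialVarList {x : ℕ} : ∀ {F : Spatial}, x ∈ spatialVarList F ↔ x ∈ F.vars
  | .emp => by simp [spatialVarList, Spatial.vars]
  | .pto t u => by simp [spatialVarList, Spatial.vars, mem_trmVarList]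
  | .arr t u => by simp [spatialVarList, Spatial.vars, mem_trmVarList]
  | .star F G => by
      simp [spatialVarList, Spatial.vars, mem_spatialVarList (F := F),
        mem_spatialVarList (F := G)]

def shVarList (A : SymHeap) : List ℕ := pureVarList A.pure ++ spatialVarList A.spatial

theorem mem_shVarList {x : ℕ} {A : SymHeap} : x ∈ shVarList A ↔ x ∈ A.vars := by
  simp [shVarList, SymHeap.vars, mem_pureVarList, mem_spatialVarList]

/-! ### Pinning a list of variables -/

theorem bigAnd_sat {s : Stack} : ∀ {ps : List PureF}, (bigAnd ps).sat s ↔ ∀ p ∈ ps, p.sat s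
  | [] => by simp [bigAnd, PureF.sat]
  | p :: ps => by simp [bigAnd, PureF.sat, bigAnd_sat (ps := ps)]

def pin (l : List ℕ) (c : Stack) : PureF :=
  bigAnd (l.map fun x => .eq (.var x) (.const (c x)))

theorem pin_sat {l : List ℕ} {c s : Stack} : (pin l c).sat s ↔ ∀ x ∈ l, s x = c x := by
  simp [pin, bigAnd_sat, PureF.sat, Trm.eval]

/-! ### Fixing a list of variables to constants -/

def updL (s : Stack) (zs : List ℕ) (c : Stack) : Stack :=
  fun x => if x ∈ zs then c x else s x

theorem updL_self (s : Stack) (zs : List ℕ) : updL s zs s = s := by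
  funext x; by_cases hx : x ∈ zs <;> simp [updL, hx]

theorem updL_idem (s : Stack) (zs : List ℕ) (c : Stack) :
    updL (updL s zs c) zs c = updL s zs c := by
  funext x; by_cases hx : x ∈ zs <;> simp [updL, hx]

theorem updL_eq_of_not_mem {s : Stack} {zs : List ℕ} {c : Stack} {x : ℕ} (hx : x ∉ zs) :
    updL s zs c x = s x := by simp [updL, hx]

def trmFix (zs : List ℕ) (c : Stack) : Trm → Trm
  | .var x => if x ∈ zs then .const (c x) else .var x
  | .const n => .const n
  | .add t u => .add (trmFix zs c t) (trmFix zs c u)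
  | .smul n t => .smul n (trmFix zs c t)

theorem eval_trmFix {zs : List ℕ} {c s : Stack} : ∀ t : Trm,
    (trmFix zs c t).eval s = t.eval (updL s zs c)
  | .var x => by by_cases hx : x ∈ zs <;> simp [trmFix, hx, Trm.eval, updL]
  | .const n => rfl
  | .add t u => by simp [trmFix, Trm.eval, eval_trmFix t, eval_trmFix u]
  | .smul n t => by simp [trmFix, Trm.eval, eval_trmFix t]

theorem vars_trmFix {zs : List ℕ} {c : Stack} {z : ℕ} (hz : z ∈ zs) : ∀ t : Trm,
    z ∉ (trmFix zs c t).vars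
  | .var x => by
      by_cases hx : x ∈ zs
      · simp [trmFix, hx, Trm.vars]
      · simp only [trmFix, hx, if_false, Trm.vars, Set.mem_singleton_iff]
        rintro rfl; exact hx hz
  | .const n => by simp [trmFix, Trm.vars]
  | .add t u => by
      simp only [trmFix, Trm.vars, Set.mem_union, not_or]
      exact ⟨vars_trmFix hz t, vars_trmFix hz u⟩
  | .smul n t => vars_trmFix hz t

def pureFix (zs : List ℕ) (c : Stack) : PureF → PureF
  | .tru => .tru
  | .eq t u => .eq (trmFix zs c t) (trmFix zs c u)
  | .ne t u => .ne (trmFix zs c t) (trmFix zs c u)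
  | .le t u => .le (trmFix zs c t) (trmFix zs c u)
  | .lt t u => .lt (trmFix zs c t) (trmFix zs c u)
  | .and p q => .and (pureFix zs c p) (pureFix zs c q)

theorem sat_pureFix {zs : List ℕ} {c s : Stack} : ∀ p : PureF,
    (pureFix zs c p).sat s ↔ p.sat (updL s zs c)
  | .tru => Iff.rfl
  | .eq t u => by simp [pureFix, PureF.sat, eval_trmFix]
  | .ne t u => by simp [pureFix, PureF.sat, eval_trmFix]
  | .le t u => by simp [pureFix, PureF.sat, eval_trmFix]
  | .lt t u => by simp [pureFix, PureF.sat, eval_trmFix]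
  | .and p q => by simp [pureFix, PureF.sat, sat_pureFix p, sat_pureFix q]

theorem vars_pureFix {zs : List ℕ} {c : Stack} {z : ℕ} (hz : z ∈ zs) : ∀ p : PureF,
    z ∉ (pureFix zs c p).vars
  | .tru => by simp [pureFix, PureF.vars]
  | .eq t u => by
      simp only [pureFix, PureF.vars, Set.mem_union, not_or]
      exact ⟨vars_trmFix hz t, vars_trmFix hz u⟩
  | .ne t u => by
      simp only [pureFix, PureF.vars, Set.mem_union, not_or]
      exact ⟨vars_trmFix hz t, vars_trmFix hz u⟩
  | .le t u => by
      simp only [pureFix, PureF.vars, Set.mem_union, not_or]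
      exact ⟨vars_trmFix hz t, vars_trmFix hz u⟩
  | .lt t u => by
      simp only [pureFix, PureF.vars, Set.mem_union, not_or]
      exact ⟨vars_trmFix hz t, vars_trmFix hz u⟩
  | .and p q => by
      simp only [pureFix, PureF.vars, Set.mem_union, not_or]
      exact ⟨vars_pureFix hz p, vars_pureFix hz q⟩

def spatialFix (zs : List ℕ) (c : Stack) : Spatial → Spatial
  | .emp => .emp
  | .pto t u => .pto (trmFix zs c t) (trmFix zs c u)
  | .arr t u => .arr (trmFix zs c t) (trmFix zs c u)
  | .star F G => .star (spatialFix zs c F) (spatialFix zs c G)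

theorem sat_spatialFix {zs : List ℕ} {c s : Stack} : ∀ (F : Spatial) (h : Heap),
    (spatialFix zs c F).sat s h ↔ F.sat (updL s zs c) h
  | .emp, h => Iff.rfl
  | .pto t u, h => by
      simp only [spatialFix, Spatial.sat]
      rw [eval_trmFix t, eval_trmFix u]
  | .arr t u, h => by
      simp only [spatialFix, Spatial.sat]
      rw [eval_trmFix t, eval_trmFix u]
  | .star F G, h => by
      simp only [spatialFix, Spatial.sat]
      constructor <;> rintro ⟨h1, h2, hd, hu, hF, hG⟩
      · exact ⟨h1, h2, hd, hu, (sat_spatialFix F h1).mp hF, (sat_spatialFix G h2).mp hG⟩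
      · exact ⟨h1, h2, hd, hu, (sat_spatialFix F h1).mpr hF, (sat_spatialFix G h2).mpr hG⟩

theorem vars_spatialFix {zs : List ℕ} {c : Stack} {z : ℕ} (hz : z ∈ zs) : ∀ F : Spatial,
    z ∉ (spatialFix zs c F).vars
  | .emp => by simp [spatialFix, Spatial.vars]
  | .pto t u => by
      simp only [spatialFix, Spatial.vars, Set.mem_union, not_or]
      exact ⟨vars_trmFix hz t, vars_trmFix hz u⟩
  | .arr t u => by
      simp only [spatialFix, Spatial.vars, Set.mem_union, not_or]
      exact ⟨vars_trmFix hz t, vars_trmFix hz u⟩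
  | .star F G => by
      simp only [spatialFix, Spatial.vars, Set.mem_union, not_or]
      exact ⟨vars_spatialFix hz F, vars_spatialFix hz G⟩

def shFix (zs : List ℕ) (c : Stack) (A : SymHeap) : SymHeap :=
  ⟨pureFix zs c A.pure, spatialFix zs c A.spatial⟩

theorem sat_shFix {zs : List ℕ} {c s : Stack} {A : SymHeap} {h : Heap} :
    (shFix zs c A).sat s h ↔ A.sat (updL s zs c) h := by
  simp [shFix, SymHeap.sat, sat_pureFix, sat_spatialFix]

theorem vars_shFix {zs : List ℕ} {c : Stack} {z : ℕ} (hz : z ∈ zs) (A : SymHeap) :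
    z ∉ (shFix zs c A).vars := by
  simp only [shFix, SymHeap.vars, Set.mem_union, not_or]
  exact ⟨vars_pureFix hz _, vars_spatialFix hz _⟩

/-! ### Heap construction and restriction -/

def mkHeapL : List ℕ → (ℕ → ℕ) → Heap
  | [], _ => ∅
  | k :: ks, f => (mkHeapL ks f).insert k (f k)

theorem lookup_mkHeapL (f : ℕ → ℕ) : ∀ (l : List ℕ) (k : ℕ),
    (mkHeapL l f).lookup k = if k ∈ l then some (f k) else none
  | [], k => by simp [mkHeapL]
  | a :: l, k => by
      by_cases hk : k = a
      · subst hk; simp [mkHeapL, Finmap.lookup_insert]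
      · simp only [mkHeapL, Finmap.lookup_insert_of_ne _ hk, lookup_mkHeapL f l k,
          List.mem_cons, hk, false_or]

theorem mem_mkHeapL {l : List ℕ} {f : ℕ → ℕ} {k : ℕ} : k ∈ mkHeapL l f ↔ k ∈ l := by
  rw [← Finmap.lookup_isSome, lookup_mkHeapL]
  split <;> simp_all

noncomputable def restrictH (h : Heap) (K : Finset ℕ) : Heap :=
  mkHeapL K.toList fun k => (h.lookup k).getD 0

theorem lookup_restrictH {h : Heap} {K : Finset ℕ} {k : ℕ} :
    (restrictH h K).lookup k = if k ∈ K then some ((h.lookup k).getD 0) else none := by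
  simp [restrictH, lookup_mkHeapL, Finset.mem_toList]

theorem mem_restrictH {h : Heap} {K : Finset ℕ} {k : ℕ} : k ∈ restrictH h K ↔ k ∈ K := by
  rw [← Finmap.lookup_isSome, lookup_restrictH]
  split <;> simp_all

theorem keys_restrictH {h : Heap} {K : Finset ℕ} : (restrictH h K).keys = K :=
  Finset.ext fun a => by rw [Finmap.mem_keys, mem_restrictH]

theorem lookup_restrictH_of_mem {h : Heap} {K : Finset ℕ} {k : ℕ} (hK : k ∈ K)
    (hm : k ∈ h) : (restrictH h K).lookup k = h.lookup k := by
  obtain ⟨v, hv⟩ := Finmap.mem_iff.mp hm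
  rw [lookup_restrictH, if_pos hK, hv]
  rfl

/-! ### Footprints -/

def Spatial.foot (s : Stack) : Spatial → Finset ℕ
  | .emp => ∅
  | .pto t _ => {t.eval s}
  | .arr t u => Finset.Icc (t.eval s) (u.eval s)
  | .star F G => F.foot s ∪ G.foot s

theorem sat_keys {s : Stack} : ∀ {F : Spatial} {h : Heap}, F.sat s h → h.keys = F.foot s
  | .emp, h, hs => by rw [hs]; rfl
  | .pto t u, h, hs => hs.1
  | .arr t u, h, hs => hs.2
  | .star F G, h, ⟨h1, h2, hd, hu, hF, hG⟩ => by
      rw [hu, Finmap.keys_union, sat_keys hF, sat_keys hG]; rfl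

theorem sat_pto_lookup {s : Stack} : ∀ {F : Spatial} {h : Heap}, F.sat s h →
    ∀ p ∈ F.ptos, h.lookup (p.1.eval s) = some (p.2.eval s)
  | .emp, h, _, p, hp => by simp [Spatial.ptos] at hp
  | .pto t u, h, hs, p, hp => by
      simp only [Spatial.ptos, List.mem_singleton] at hp
      subst hp; exact hs.2
  | .arr t u, h, _, p, hp => by simp [Spatial.ptos] at hp
  | .star F G, h, ⟨h1, h2, hd, hu, hF, hG⟩, p, hp => by
      rcases List.mem_append.mp hp with h' | h'
      · have hl := sat_pto_lookup hF p h'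
        have hm : p.1.eval s ∈ h1 := Finmap.lookup_isSome.mp (by rw [hl]; rfl)
        rw [hu, Finmap.lookup_union_left hm]; exact hl
      · have hl := sat_pto_lookup hG p h'
        have hm : p.1.eval s ∈ h2 := Finmap.lookup_isSome.mp (by rw [hl]; rfl)
        have hnm : p.1.eval s ∉ h1 := fun hx => hd _ hx hm
        rw [hu, Finmap.lookup_union_right hnm]; exact hl

theorem ptos_vars : ∀ {F : Spatial} {p : Trm × Trm}, p ∈ F.ptos →
    p.1.vars ⊆ F.vars ∧ p.2.vars ⊆ F.vars
  | .emp, p, hp => by simp [Spatial.ptos] at hp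
  | .pto t u, p, hp => by
      simp only [Spatial.ptos, List.mem_singleton] at hp
      subst hp
      exact ⟨Set.subset_union_left, Set.subset_union_right⟩
  | .arr t u, p, hp => by simp [Spatial.ptos] at hp
  | .star F G, p, hp => by
      rcases List.mem_append.mp hp with h' | h'
      · exact ⟨(ptos_vars h').1.trans Set.subset_union_left,
          (ptos_vars h').2.trans Set.subset_union_left⟩
      · exact ⟨(ptos_vars h').1.trans Set.subset_union_right,
          (ptos_vars h').2.trans Set.subset_union_right⟩

/-! ### Transfer lemma: satisfaction depends only on keys and points-to values -/

theorem sat_transfer {s : Stack} : ∀ {F : Spatial} {h1 : Heap}, F.sat s h1 →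
    ∀ {h2 : Heap}, h2.keys = h1.keys →
    (∀ p ∈ F.ptos, h2.lookup (p.1.eval s) = some (p.2.eval s)) → F.sat s h2
  | .emp, h1, hs, h2, hk, _ => by
      subst hs
      refine Finmap.ext_lookup fun x => ?_
      rw [Finmap.lookup_empty, Finmap.lookup_eq_none]
      rw [← Finmap.mem_keys, hk]
      simp
  | .pto t u, h1, hs, h2, hk, hl =>
      ⟨hk.trans hs.1, hl (t, u) (by simp [Spatial.ptos])⟩
  | .arr t u, h1, hs, h2, hk, _ => ⟨hs.1, hk.trans hs.2⟩
  | .star F G, h1, ⟨a, b, hd, hu, hF, hG⟩, h2, hk, hl => by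
      have hk2 : h2.keys = a.keys ∪ b.keys := by rw [hk, hu, Finmap.keys_union]
      have hmem2 : ∀ k : ℕ, k ∈ a.keys ∪ b.keys → k ∈ h2 := fun k hkm => by
        rw [← Finmap.mem_keys, hk2]; exact hkm
      refine ⟨restrictH h2 a.keys, restrictH h2 b.keys, ?_, ?_, ?_, ?_⟩
      · intro x hx hx'
        rw [mem_restrictH, Finmap.mem_keys] at hx hx'
        exact hd x hx hx'
      · refine Finmap.ext_lookup fun x => ?_
        by_cases hxa : x ∈ a.keys
        · rw [Finmap.lookup_union_left (mem_restrictH.mpr hxa),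
            lookup_restrictH_of_mem hxa (hmem2 x (Finset.mem_union_left _ hxa))]
        · by_cases hxb : x ∈ b.keys
          · rw [Finmap.lookup_union_right (by rw [mem_restrictH]; exact hxa),
              lookup_restrictH_of_mem hxb (hmem2 x (Finset.mem_union_right _ hxb))]
          · have hx2 : x ∉ h2 := by
              rw [← Finmap.mem_keys, hk2]
              simp [hxa, hxb]
            rw [Finmap.lookup_eq_none.mpr hx2, Finmap.lookup_eq_none.mpr]
            rw [Finmap.mem_union, mem_restrictH, mem_restrictH]
            simp [hxa, hxb]
      · refine sat_transfer hF keys_restrictH fun p hp => ?_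
        have hl0 := sat_pto_lookup hF p hp
        have hma : p.1.eval s ∈ a.keys :=
          Finmap.mem_keys.mpr (Finmap.lookup_isSome.mp (by rw [hl0]; rfl))
        rw [lookup_restrictH_of_mem hma (hmem2 _ (Finset.mem_union_left _ hma))]
        exact hl p (List.mem_append_left _ hp)
      · refine sat_transfer hG keys_restrictH fun p hp => ?_
        have hl0 := sat_pto_lookup hG p hp
        have hmb : p.1.eval s ∈ b.keys :=
          Finmap.mem_keys.mpr (Finmap.lookup_isSome.mp (by rw [hl0]; rfl))
        rw [lookup_restrictH_of_mem hmb (hmem2 _ (Finset.mem_union_right _ hmb))]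
        exact hl p (List.mem_append_right _ hp)

theorem le_foldr_max {a : ℕ} : ∀ {l : List ℕ}, a ∈ l → a ≤ l.foldr max 0
  | b :: l, h => by
      rcases List.mem_cons.mp h with rfl | h'
      · exact le_max_left _ _
      · exact le_trans (le_foldr_max h') (le_max_right _ _)

end Aux

/-- Proposition (quantified biabduction): let `A` be quantifier-free and
`B = ∃z⃗. Q` with `Q` quantifier-free, where `z⃗` is disjoint from the variables
of `A` and no variable of `z⃗` occurs on the right-hand side of a points-to in
`Q`. Then `(A, ∃z⃗. Q)` has a biabduction solution (with `X`, `Y` capture-free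
w.r.t. `z⃗`) iff `(A, Q)` has one. -/
theorem stmt_13 (A : SymHeap) (zs : List ℕ) (Q : SymHeap)
    (hzA : ∀ z ∈ zs, z ∉ A.vars)
    (hrhs : ∀ p ∈ Q.spatial.ptos, ∀ z ∈ zs, z ∉ Trm.vars p.2) :
    (∃ X Y : SymHeap,
        (∀ z ∈ zs, z ∉ X.vars ∧ z ∉ Y.vars) ∧
        (A.star X).Satisfiable ∧
        (∀ (s : Stack) (h : Heap), (A.star X).sat s h →
          QSymHeap.sat s h ⟨zs, Q.star Y⟩)) ↔
    (∃ X Y : SymHeap, (A.star X).Satisfiable ∧ Entails (A.star X) (Q.star Y)) := by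
  constructor
  · rintro ⟨X, Y, hfree, ⟨s₀, h₀, hsat⟩, hent⟩
    set M : ℕ := (((Spatial.star Q.spatial Y.spatial).ptos).map fun p => p.2.eval s₀).foldr max 0 + 1 with hMdef
    set pA : List ℕ := ((Spatial.star A.spatial X.spatial).ptos).map (fun p => p.1.eval s₀) with hpAdef
    set hg : Heap := mkHeapL h₀.keys.toList
      (fun k => if k ∈ pA then (h₀.lookup k).getD 0 else M) with hhgdef
    have hgmem : ∀ k : ℕ, k ∈ hg ↔ k ∈ h₀ := fun k =>
      mem_mkHeapL.trans (by rw [Finset.mem_toList, Finmap.mem_keys])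
    have hgkeys : hg.keys = h₀.keys :=
      Finset.ext fun k => by rw [Finmap.mem_keys, hgmem, Finmap.mem_keys]
    have hglook : ∀ k ∈ h₀,
        hg.lookup k = some (if k ∈ pA then (h₀.lookup k).getD 0 else M) := fun k hk => by
      rw [hhgdef, lookup_mkHeapL,
        if_pos (by rw [Finset.mem_toList, Finmap.mem_keys]; exact hk)]
    have hsatg : (A.star X).sat s₀ hg := by
      refine ⟨hsat.1, sat_transfer hsat.2 hgkeys fun p hp => ?_⟩
      have hl0 := sat_pto_lookup hsat.2 p hp
      have hm : p.1.eval s₀ ∈ h₀ := Finmap.lookup_isSome.mp (by rw [hl0]; rfl)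
      rw [hglook _ hm, if_pos (show Trm.eval s₀ p.1 ∈ pA from List.mem_map.mpr ⟨p, hp, rfl⟩), hl0]
      rfl
    obtain ⟨s₂, hagr, hQY⟩ := hent s₀ hg hsatg
    have hs20 : ∀ x ∈ A.vars ∪ X.vars, s₂ x = s₀ x := by
      intro x hx
      refine hagr x fun hz => ?_
      rw [Set.mem_union] at hx
      rcases hx with hx | hx
      exacts [hzA x hz hx, (hfree x hz).1 hx]
    set L : List ℕ := shVarList A ++ shVarList X ++ shVarList Q ++ shVarList Y with hLdef
    have hmemL : ∀ x : ℕ, (x ∈ A.vars ∨ x ∈ X.vars ∨ x ∈ Q.vars ∨ x ∈ Y.vars) → x ∈ L := by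
      intro x hx
      rw [hLdef]
      simp only [List.mem_append, mem_shVarList]
      tauto
    have hliftAX : ∀ x : ℕ, x ∈ (Spatial.star A.spatial X.spatial).vars →
        x ∈ A.vars ∪ X.vars := by
      intro x hx
      simp only [Spatial.vars, Set.mem_union] at hx
      rw [Set.mem_union]
      rcases hx with hx | hx
      exacts [Or.inl (Set.mem_union_right _ hx), Or.inr (Set.mem_union_right _ hx)]
    refine ⟨⟨(pin L s₂).and X.pure, X.spatial⟩, Y, ?_, ?_⟩
    · refine ⟨s₂, hg,
        ⟨(psat_congr fun x hx =>
            hs20 x (Set.mem_union_left _ (Set.mem_union_left _ hx))).mpr hsat.1.1,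
          pin_sat.mpr fun x _ => rfl,
          (psat_congr fun x hx =>
            hs20 x (Set.mem_union_right _ (Set.mem_union_left _ hx))).mpr hsat.1.2⟩,
        (ssat_congr fun x hx => hs20 x (hliftAX x hx)).mpr hsatg.2⟩
    · rintro s h ⟨⟨hpA', hpin, hpX'⟩, hsp⟩
      have hsL : ∀ x ∈ L, s x = s₂ x := pin_sat.mp hpin
      have hsAX : ∀ x ∈ A.vars ∪ X.vars, s x = s₀ x := by
        intro x hx
        rw [Set.mem_union] at hx
        rw [hsL x (hmemL x (by tauto))]
        exact hs20 x (Set.mem_union _ _ _ |>.mpr hx)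
      have hsQYv : ∀ x : ℕ, x ∈ Q.vars ∨ x ∈ Y.vars → s x = s₂ x := fun x hx =>
        hsL x (hmemL x (by tauto))
      have hspg : (Spatial.star A.spatial X.spatial).sat s hg :=
        (ssat_congr (s' := s₀) fun x hx => hsAX x (hliftAX x hx)).mpr hsatg.2
      have hkeq : h.keys = hg.keys := (sat_keys hsp).trans (sat_keys hspg).symm
      have hliftQY : ∀ x : ℕ, x ∈ (Spatial.star Q.spatial Y.spatial).vars →
          x ∈ Q.vars ∨ x ∈ Y.vars := by
        intro x hx
        simp only [Spatial.vars, Set.mem_union] at hx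
        rcases hx with hx | hx
        exacts [Or.inl (Set.mem_union_right _ hx), Or.inr (Set.mem_union_right _ hx)]
      have hQYs : (Q.star Y).sat s hg := by
        refine ⟨(psat_congr (s' := s₂) fun x hx => ?_).mpr hQY.1,
          (ssat_congr (s' := s₂) fun x hx => hsQYv x (hliftQY x hx)).mpr hQY.2⟩
        refine hsQYv x ?_
        simp only [SymHeap.star, PureF.vars, Set.mem_union] at hx
        rcases hx with hx | hx
        exacts [Or.inl (Set.mem_union_left _ hx), Or.inr (Set.mem_union_left _ hx)]
      refine ⟨hQYs.1, sat_transfer hQYs.2 hkeq fun p hp => ?_⟩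
      have hlg := sat_pto_lookup hQYs.2 p hp
      have hmhg : p.1.eval s ∈ hg := Finmap.lookup_isSome.mp (by rw [hlg]; rfl)
      have hm0 : p.1.eval s ∈ h₀ := (hgmem _).mp hmhg
      have hlg2 := hglook _ hm0
      by_cases hcase : p.1.eval s ∈ pA
      · obtain ⟨q, hq, hqe⟩ := List.mem_map.mp hcase
        have hqv := ptos_vars (F := .star A.spatial X.spatial) hq
        have hqe' : q.1.eval s = p.1.eval s := by
          rw [eval_congr (t := q.1) (s' := s₀) fun x hx => hsAX x (hliftAX x (hqv.1 hx))]
          exact hqe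
        have h1 : h.lookup (p.1.eval s) = some (q.2.eval s) := by
          rw [← hqe']; exact sat_pto_lookup hsp q hq
        have h2 : hg.lookup (p.1.eval s) = some (q.2.eval s) := by
          rw [← hqe']; exact sat_pto_lookup hspg q hq
        rw [h1]
        exact h2.symm.trans hlg
      · exfalso
        rw [hlg, if_neg hcase] at hlg2
        have hpM : p.2.eval s = M := Option.some.inj hlg2
        have hqv := ptos_vars (F := .star Q.spatial Y.spatial) hp
        have hps2 : p.2.eval s = p.2.eval s₂ :=
          eval_congr fun x hx => hsQYv x (hliftQY x (hqv.2 hx))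
        have hnz : ∀ x ∈ p.2.vars, x ∉ zs := by
          have hp' : p ∈ Q.spatial.ptos ++ Y.spatial.ptos := hp
          rcases List.mem_append.mp hp' with hQp | hYp
          · exact fun x hx hz => hrhs p hQp x hz hx
          · intro x hx hz
            exact (hfree x hz).2
              (Set.mem_union_right _ ((ptos_vars (F := Y.spatial) hYp).2 hx))
        have hps0 : p.2.eval s₂ = p.2.eval s₀ :=
          eval_congr fun x hx => hagr x (hnz x hx)
        have hlt : p.2.eval s₀ < M := by
          rw [hMdef]
          exact Nat.lt_succ_of_le (le_foldr_max (List.mem_map.mpr ⟨p, hp, rfl⟩))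
        omega
  · rintro ⟨X, Y, ⟨s₀, h₀, hsat⟩, hent⟩
    refine ⟨shFix zs s₀ X, shFix zs s₀ Y,
      fun z hz => ⟨vars_shFix hz X, vars_shFix hz Y⟩, ⟨s₀, h₀, ?_⟩, ?_⟩
    · obtain ⟨⟨hpA0, hpX0⟩, h1, h2, hd, hu, hsA0, hsX0⟩ := hsat
      exact ⟨⟨hpA0, (sat_pureFix _).mpr (by rw [updL_self]; exact hpX0)⟩,
        h1, h2, hd, hu, hsA0, (sat_spatialFix _ _).mpr (by rw [updL_self]; exact hsX0)⟩
    · intro s h hsh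
      obtain ⟨⟨hpA', hpX'⟩, h1, h2, hd, hu, hsA', hsX'⟩ := hsh
      refine ⟨updL s zs s₀, fun x hx => updL_eq_of_not_mem hx, ?_⟩
      have hAX : (A.star X).sat (updL s zs s₀) h := by
        refine ⟨⟨(psat_congr (s' := updL s zs s₀) fun x hx =>
            (updL_eq_of_not_mem fun hz => hzA x hz (Set.mem_union_left _ hx)).symm).mp hpA',
          (sat_pureFix _).mp hpX'⟩,
          h1, h2, hd, hu,
          (ssat_congr (s' := updL s zs s₀) fun x hx =>
            (updL_eq_of_not_mem fun hz => hzA x hz (Set.mem_union_right _ hx)).symm).mp hsA',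
          (sat_spatialFix _ _).mp hsX'⟩
      obtain ⟨⟨hpQ, hpY⟩, g1, g2, gd, gu, hsQ, hsY⟩ := hent _ h hAX
      exact ⟨⟨hpQ, (sat_pureFix _).mpr (by rw [updL_idem]; exact hpY)⟩,
        g1, g2, gd, gu, hsQ, (sat_spatialFix _ _).mpr (by rw [updL_idem]; exact hsY)⟩
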